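/- Consider the constrained differential inclusion Σ and a closed set K ⊆ ℝⁿ such that F(x) ⊆ T_K(x) for every x ∈ ∂K ∩ int(C). Let φ be a solution of Σ starting from x ∈ ∂K that satisfies property (★) with constant T > 0. Then φ cannot leave K immediately; more precisely, φ([0,T]) ⊆ K for the same T appearing in (★). -/

import Mathlib

open MeasureTheory Filter Topology Set
open scoped RealInnerProductSpace

/-- Euclidean space ℝⁿ. -/
abbrev Euc (n : ℕ) := EuclideanSpace ℝ (Fin n)

variable {E : Type*} [NormedAddCommGroup E] [InnerProductSpace ℝ E]

/-- The contingent (Bouligand) cone to `S` at `x`: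
`v` belongs to it iff there are sequences `tᵢ → 0⁺` and `vᵢ → v` with `x + tᵢ • vᵢ ∈ S`. -/
def contingentCone (S : Set E) (x : E) : Set E :=
  {v | ∃ t : ℕ → ℝ, ∃ w : ℕ → E,
    (∀ i, 0 < t i) ∧ Tendsto t atTop (𝓝 0) ∧ Tendsto w atTop (𝓝 v) ∧
    ∀ i, x + t i • w i ∈ S}

/-- The adjacent cone to `S` at `x`:
`v` belongs to it iff for every sequence `tᵢ → 0⁺` there is `vᵢ → v` with `x + tᵢ • vᵢ ∈ S`. -/
def adjacentCone (S : Set E) (x : E) : Set E :=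
  {v | ∀ t : ℕ → ℝ, (∀ i, 0 < t i) → Tendsto t atTop (𝓝 0) →
    ∃ w : ℕ → E, Tendsto w atTop (𝓝 v) ∧ ∀ i, x + t i • w i ∈ S}

/-- The Dubovitskiy cone to `S` at `x`. -/
def dubovitskiyCone (S : Set E) (x : E) : Set E :=
  {v | ∀ t : ℕ → ℝ, ∀ w : ℕ → E, (∀ i, 0 < t i) → Tendsto t atTop (𝓝 0) →
    Tendsto w atTop (𝓝 v) → ∀ᶠ i in atTop, x + t i • w i ∈ interior S}

/-- Lower semicontinuity of a set-valued map at a point along a filter `l`. -/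
def SVLowerSemicontinuousAt (F : E → Set E) (l : Filter E) (x : E) : Prop :=
  ∀ U : Set E, IsOpen U → (F x ∩ U).Nonempty → ∀ᶠ y in l, (F y ∩ U).Nonempty

/-- Upper semicontinuity of a set-valued map at a point along a filter `l`. -/
def SVUpperSemicontinuousAt (F : E → Set E) (l : Filter E) (x : E) : Prop :=
  ∀ U : Set E, IsOpen U → F x ⊆ U → ∀ᶠ y in l, F y ⊆ U

/-- Continuity (lower and upper semicontinuity) of a set-valued map at `x` along `l`. -/
def SVContinuousAt (F : E → Set E) (l : Filter E) (x : E) : Prop :=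
  SVLowerSemicontinuousAt F l x ∧ SVUpperSemicontinuousAt F l x

/-- Continuity of a set-valued map. -/
def SVContinuous (F : E → Set E) : Prop := ∀ x, SVContinuousAt F (𝓝 x) x

/-- Local boundedness of a set-valued map. -/
def SVLocallyBounded (F : E → Set E) : Prop :=
  ∀ x : E, ∃ N ∈ 𝓝 x, ∃ M : ℝ, ∀ y ∈ N, ∀ v ∈ F y, ‖v‖ ≤ M

/-- One-sided local Lipschitz continuity of a set-valued map. -/
def OneSidedLocallyLipschitz (F : E → Set E) : Prop :=
  ∀ N : Set E, N.Nonempty → IsCompact N → ∃ k > 0, ∀ x₁ ∈ N, ∀ x₂ ∈ N,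
    ∀ w₁ ∈ F x₁, ∃ w₂ ∈ F x₂, ⟪x₁ - x₂, w₁⟫ ≤ ⟪x₁ - x₂, w₂⟫ + k * ‖x₁ - x₂‖ ^ 2

/-- The standing assumption (SA): `C` closed; `F x` nonempty, closed, convex on `C`;
`F` continuous and one-sided locally Lipschitz. -/
structure StandingAssumption (F : E → Set E) (C : Set E) : Prop where
  closed_C : IsClosed C
  nonempty_images : ∀ x ∈ C, (F x).Nonempty
  closed_images : ∀ x ∈ C, IsClosed (F x)
  convex_images : ∀ x ∈ C, Convex ℝ (F x)
  continuous : SVContinuous F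
  osLipschitz : OneSidedLocallyLipschitz F

/-- Admissible solution domains: `[0,T]` with `T ≥ 0`, or `[0,T)` with `T ∈ (0,∞]`. -/
def IsSolDomain (D : Set ℝ) : Prop :=
  (∃ T : ℝ, 0 ≤ T ∧ D = Icc 0 T) ∨ (∃ T : ℝ, 0 < T ∧ D = Ico 0 T) ∨ D = Ici 0

/-- `φ` is a solution of the constrained differential inclusion `ẋ ∈ F(x)`, `x ∈ C`,
on the domain `D`: it stays in `C` and is a locally absolutely continuous arc whose
derivative is an integrable selection of `F ∘ φ` almost everywhere. -/
def IsSolution (F : E → Set E) (C : Set E) (D : Set ℝ) (φ : ℝ → E) : Prop :=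
  IsSolDomain D ∧ (∀ t ∈ D, φ t ∈ C) ∧
  ∃ g : ℝ → E,
    (∀ᵐ t ∂(volume.restrict D), g t ∈ F (φ t)) ∧
    ∀ t ∈ D, IntervalIntegrable g volume 0 t ∧ φ t = φ 0 + ∫ s in (0:ℝ)..t, g s

/-- Forward invariance of `K` for the constrained differential inclusion. -/
def ForwardInvariant (F : E → Set E) (C K : Set E) : Prop :=
  ∀ D : Set ℝ, ∀ φ : ℝ → E, IsSolution F C D φ → φ 0 ∈ K → ∀ t ∈ D, φ t ∈ K

/-- The set 𝒫 of critical points: points of `∂K ∩ ∂C` every neighborhood of which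
meets `C \ K`. -/
def critSet (K C : Set E) : Set E :=
  {x | x ∈ frontier K ∩ frontier C ∧ ∀ N ∈ 𝓝 x, (N ∩ (C \ K)).Nonempty}

/-- The set of initial speeds `F_φ(x)` of an arc `φ` at `x`. -/
def initialSpeeds (φ : ℝ → E) (x : E) : Set E :=
  {v | ∃ t : ℕ → ℝ, (∀ i, 0 < t i) ∧ Tendsto t atTop (𝓝 0) ∧
    Tendsto (fun i => (t i)⁻¹ • (φ (t i) - x)) atTop (𝓝 v)}

/-- The metric projection of `y` onto `S`. -/
def projSet (S : Set E) (y : E) : Set E := {z ∈ S | dist y z = Metric.infDist y S}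

/-- `φ` leaves `K` immediately: for some `T > 0`, `φ(t) ∈ C \ K` on `(0,T]`. -/
def LeavesImmediately (K C : Set E) (D : Set ℝ) (φ : ℝ → E) : Prop :=
  ∃ T > 0, Ioc 0 T ⊆ D ∧ ∀ t ∈ Ioc 0 T, φ t ∈ C \ K

/-- Property (★): for some `T > 0`, `Proj_{∂K}(φ(t)) ∩ int C ≠ ∅` on `(0,T]`. -/
def PropStar (K C : Set E) (D : Set ℝ) (φ : ℝ → E) : Prop :=
  ∃ T > 0, Ioc 0 T ⊆ D ∧
    ∀ t ∈ Ioc 0 T, (projSet (frontier K) (φ t) ∩ interior C).Nonempty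

/-- Euclidean norm of the concatenated vector `(v₁, v₂) ∈ ℝ²ⁿ`. -/
noncomputable def pairNorm (v₁ v₂ : E) : ℝ := Real.sqrt (‖v₁‖ ^ 2 + ‖v₂‖ ^ 2)

/-- Assumption 1: `F(x) ⊆ T_K(x)` on 𝒫. -/
def Assumption1 (F : E → Set E) (K C : Set E) : Prop :=
  ∀ x ∈ critSet K C, F x ⊆ contingentCone K x

/-- Assumption 2: `F(x) ∩ T_{∂K ∩ ∂C}(x) = ∅` on 𝒫. -/
def Assumption2 (F : E → Set E) (K C : Set E) : Prop :=
  ∀ x ∈ critSet K C, F x ∩ contingentCone (frontier K ∩ frontier C) x = ∅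

/-- Assumption 3 (transversality) at a point `x`. -/
def Assumption3At (K C : Set E) (x : E) : Prop :=
  contingentCone (frontier K) x = adjacentCone (frontier K) x ∧
  contingentCone C x = adjacentCone C x ∧
  ∃ N ∈ 𝓝 x, ∃ c > 0, ∃ α ∈ Ico (0:ℝ) 1,
    ∀ x₁ ∈ (frontier K \ C) ∩ N, ∀ x₂ ∈ (frontier C \ frontier K) ∩ N,
      ∃ v₁ ∈ contingentCone (frontier K) x₁, ∃ v₂ ∈ contingentCone C x₂,
        pairNorm v₁ v₂ ≤ c * ‖x₁ - x₂‖ ∧ ‖(x₂ - x₁) - (v₁ - v₂)‖ ≤ α * ‖x₁ - x₂‖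

/-- Assumption 3 (transversality) on 𝒫. -/
def Assumption3 (K C : Set E) : Prop := ∀ x ∈ critSet K C, Assumption3At K C x

/-- The transversality condition (◇) for a pair of sets at `x₀`. -/
def TransversalAt (K₁ K₂ : Set E) (x₀ : E) : Prop :=
  ∃ N ∈ 𝓝 x₀, ∃ c > 0, ∃ α ∈ Ico (0:ℝ) 1,
    ∀ x₁ ∈ (frontier K₁ \ K₂) ∩ N, ∀ x₂ ∈ (frontier K₂ \ K₁) ∩ N,
      ∃ v₁ ∈ contingentCone K₁ x₁, ∃ v₂ ∈ contingentCone K₂ x₂,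
        pairNorm v₁ v₂ ≤ c * ‖x₁ - x₂‖ ∧ ‖(x₂ - x₁) - (v₁ - v₂)‖ ≤ α * ‖x₁ - x₂‖

/-! ### Auxiliary lemmas -/

section Aux

theorem aux_inner_nonpos_of_mem_contingentCone {K : Set E} {y z w : E}
    (hmin : ∀ p ∈ K, ‖y - z‖ ≤ ‖y - p‖) (hw : w ∈ contingentCone K z) :
    ⟪y - z, w⟫ ≤ 0 := by
  obtain ⟨t, v, htpos, ht0, hv, hmem⟩ := hw
  have key : ∀ i, ⟪y - z, v i⟫ ≤ t i * ‖v i‖ ^ 2 / 2 := by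
    intro i
    have h1 : ‖y - z‖ ≤ ‖y - (z + t i • v i)‖ := hmin _ (hmem i)
    have h2 : ‖y - z‖ ^ 2 ≤ ‖(y - z) - t i • v i‖ ^ 2 := by
      rw [show y - (z + t i • v i) = (y - z) - t i • v i by abel] at h1
      exact pow_le_pow_left₀ (norm_nonneg _) h1 2
    have h2' : ‖(y - z) - t i • v i‖ ^ 2
        = ‖y - z‖ ^ 2 - 2 * ⟪y - z, t i • v i⟫ + ‖t i • v i‖ ^ 2 :=
      norm_sub_sq_real _ _
    have h3 : 2 * ⟪y - z, t i • v i⟫ ≤ ‖t i • v i‖ ^ 2 := by nlinarith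
    rw [real_inner_smul_right] at h3
    rw [norm_smul] at h3
    have hti := (htpos i).le
    have : 2 * (t i * ⟪y - z, v i⟫) ≤ (t i) ^ 2 * ‖v i‖ ^ 2 := by
      calc 2 * (t i * ⟪y - z, v i⟫) ≤ (‖t i‖ * ‖v i‖) ^ 2 := h3
        _ = (t i) ^ 2 * ‖v i‖ ^ 2 := by
          rw [Real.norm_eq_abs, abs_of_nonneg hti]; ring
    have h4 : t i * (2 * ⟪y - z, v i⟫) ≤ t i * (t i * ‖v i‖ ^ 2) := by nlinarith
    have := (mul_le_mul_iff_right₀ (htpos i)).1 h4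
    linarith
  have hlim1 : Tendsto (fun i => ⟪y - z, v i⟫) atTop (𝓝 ⟪y - z, w⟫) :=
    Tendsto.inner tendsto_const_nhds hv
  have hlim2 : Tendsto (fun i => t i * ‖v i‖ ^ 2 / 2) atTop (𝓝 (0 * ‖w‖ ^ 2 / 2)) :=
    (ht0.mul ((hv.norm).pow 2)).div_const 2
  rw [zero_mul, zero_div] at hlim2
  exact le_of_tendsto_of_tendsto' hlim1 hlim2 key

omit [InnerProductSpace ℝ E] in
theorem aux_infDist_frontier_eq [NormedSpace ℝ E] [ProperSpace E] {K : Set E}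
    (hK : IsClosed K) (hne : K.Nonempty)
    {y : E} (hy : y ∉ K) : Metric.infDist y (frontier K) = Metric.infDist y K := by
  obtain ⟨z, hzK, hzd⟩ := hK.exists_infDist_eq_dist hne y
  have hpos : 0 < Metric.infDist y K := by
    have h0 : Metric.infDist y K ≠ 0 := fun h => hy ((hK.mem_iff_infDist_zero hne).2 h)
    exact lt_of_le_of_ne Metric.infDist_nonneg (Ne.symm h0)
  have hdpos : 0 < dist y z := hzd ▸ hpos
  have hzf : z ∈ frontier K := by
    rw [frontier_eq_closure_inter_closure, hK.closure_eq]
    refine ⟨hzK, ?_⟩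
    have htend : Tendsto (fun t : ℝ => z + t • (y - z)) (𝓝[>] 0) (𝓝 z) := by
      have h1 : Tendsto (fun t : ℝ => z + t • (y - z)) (𝓝 0) (𝓝 (z + (0:ℝ) • (y - z))) :=
        tendsto_const_nhds.add ((continuous_id.smul continuous_const).tendsto 0)
      simpa using h1.mono_left nhdsWithin_le_nhds
    apply mem_closure_of_tendsto htend
    filter_upwards [Ioo_mem_nhdsGT_of_mem (Set.left_mem_Ico.2 one_pos)] with t ht
    intro (hmem : z + t • (y - z) ∈ K)
    have hd : dist y (z + t • (y - z)) = (1 - t) * dist y z := by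
      rw [dist_eq_norm, dist_eq_norm]
      rw [show y - (z + t • (y - z)) = (1 - t) • (y - z) by
        rw [sub_smul, one_smul]; abel]
      rw [norm_smul, Real.norm_eq_abs, abs_of_nonneg (by linarith [ht.2] : (0:ℝ) ≤ 1 - t)]
    have hlt : dist y (z + t • (y - z)) < dist y z := by
      rw [hd]; nlinarith [ht.1, ht.2, hdpos]
    have := Metric.infDist_le_dist_of_mem (x := y) hmem
    rw [hzd] at this; linarith
  refine le_antisymm ?_ (Metric.infDist_le_infDist_of_subset hK.frontier_subset ⟨z, hzf⟩)
  rw [hzd]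
  exact Metric.infDist_le_dist_of_mem hzf

omit [InnerProductSpace ℝ E] in
theorem aux_ae_tendsto_right_average [NormedSpace ℝ E] [CompleteSpace E]
    {g : ℝ → E} (hg : Integrable g volume) :
    ∀ᵐ x, Tendsto (fun z => (z - x)⁻¹ • ∫ u in x..z, g u) (𝓝[>] x) (𝓝 (g x)) := by
  filter_upwards [IsUnifLocDoublingMeasure.ae_tendsto_average_norm_sub volume
    (hg.locallyIntegrable) (1 : ℝ)] with x hx
  have hδ : Tendsto (fun z : ℝ => z - x) (𝓝[>] x) (𝓝[>] 0) := by
    apply tendsto_nhdsWithin_of_tendsto_nhds_of_eventually_within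
    · have h : Tendsto (fun z : ℝ => z - x) (𝓝 x) (𝓝 (x - x)) :=
        (continuous_id.sub continuous_const).tendsto x
      rw [sub_self] at h
      exact h.mono_left nhdsWithin_le_nhds
    · filter_upwards [self_mem_nhdsWithin] with z hz
      exact sub_pos.2 (show x < z from hz)
  have hmem : ∀ᶠ z in 𝓝[>] x,
      x ∈ Metric.closedBall ((fun _ : ℝ => x) z) (1 * ((fun z => z - x) z)) := by
    filter_upwards [self_mem_nhdsWithin] with z (hz : x < z)
    simp [le_of_lt (sub_pos.2 hz)]
  have havg := hx (fun _ : ℝ => x) (fun z => z - x) hδ hmem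
  rw [tendsto_iff_norm_sub_tendsto_zero]
  apply squeeze_zero' (by filter_upwards with z using norm_nonneg _)
    (g := fun z => 2 * ⨍ y in Metric.closedBall x (z - x), ‖g y - g x‖)
  · filter_upwards [self_mem_nhdsWithin] with z (hz : x < z)
    have hzx : (0:ℝ) < z - x := sub_pos.2 hz
    have hint : ∫ u in x..z, g u = ∫ u in Ioc x z, g u := intervalIntegral.integral_of_le hz.le
    have h1 : ((z - x)⁻¹ • ∫ u in x..z, g u) - g x
        = (z - x)⁻¹ • ∫ u in Ioc x z, (g u - g x) := by
      rw [hint, integral_sub (hg.integrableOn) (integrableOn_const (by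
        simp [Real.volume_Ioc, hzx.le]))]
      rw [smul_sub, setIntegral_const, Real.volume_real_Ioc_of_le hz.le,
        smul_smul, inv_mul_cancel₀ hzx.ne', one_smul]
    rw [h1, norm_smul, Real.norm_eq_abs, abs_of_pos (inv_pos.2 hzx)]
    have h2 : ‖∫ u in Ioc x z, (g u - g x)‖ ≤ ∫ u in Ioc x z, ‖g u - g x‖ :=
      norm_integral_le_integral_norm _
    have h3 : ∫ u in Ioc x z, ‖g u - g x‖
        ≤ ∫ u in Metric.closedBall x (z - x), ‖g u - g x‖ := by
      apply setIntegral_mono_set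
      · have : IntegrableOn (fun u => g u - g x) (Metric.closedBall x (z - x)) volume := by
          apply hg.integrableOn.sub
          refine integrableOn_const ?_
          rw [Real.volume_closedBall]; exact ENNReal.ofReal_ne_top
        exact this.norm
      · filter_upwards with u using norm_nonneg _
      · apply HasSubset.Subset.eventuallyLE
        intro u hu
        rw [Real.closedBall_eq_Icc]
        exact ⟨by linarith [hu.1.le], by linarith [hu.2]⟩
    have h4 : ∫ u in Metric.closedBall x (z - x), ‖g u - g x‖
        = (2 * (z - x)) * ⨍ y in Metric.closedBall x (z - x), ‖g y - g x‖ := by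
      rw [setAverage_eq, Real.volume_real_closedBall (by linarith),
        smul_eq_mul, ← mul_assoc, mul_inv_cancel₀ (by linarith : 2 * (z - x) ≠ 0), one_mul]
    calc (z - x)⁻¹ * ‖∫ u in Ioc x z, (g u - g x)‖
        ≤ (z - x)⁻¹ * ((2 * (z - x)) * ⨍ y in Metric.closedBall x (z - x), ‖g y - g x‖) :=
          mul_le_mul_of_nonneg_left (le_trans h2 (h3.trans_eq h4)) (inv_pos.2 hzx).le
      _ = 2 * ⨍ y in Metric.closedBall x (z - x), ‖g y - g x‖ := by
          field_simp
  · simpa using havg.const_mul 2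

theorem aux_inner_sub_add_self (a b : E) : ⟪a - b, a + b⟫ = ‖a‖ ^ 2 - ‖b‖ ^ 2 := by
  rw [inner_sub_left, inner_add_right, inner_add_right, ← real_inner_self_eq_norm_sq,
    ← real_inner_self_eq_norm_sq, real_inner_comm b a]
  ring

end Aux

set_option maxHeartbeats 1000000 in
/-- A solution starting from `∂K` satisfying property (★) with
constant `T > 0` cannot leave `K` immediately: `φ([0,T]) ⊆ K`. -/
theorem star_implies_not_leaving {n : ℕ} (F : Euc n → Set (Euc n)) (C K : Set (Euc n))
    (hSA : StandingAssumption F C) (hK : IsClosed K)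
    (hTang : ∀ x ∈ frontier K ∩ interior C, F x ⊆ contingentCone K x)
    (D : Set ℝ) (φ : ℝ → Euc n) (hsol : IsSolution F C D φ)
    (hx : φ 0 ∈ frontier K)
    (T : ℝ) (hT : 0 < T) (hTD : Ioc 0 T ⊆ D)
    (hstar : ∀ t ∈ Ioc 0 T, (projSet (frontier K) (φ t) ∩ interior C).Nonempty) :
    ∀ t ∈ Icc 0 T, φ t ∈ K := by
  classical
  obtain ⟨hdom, hmemC, g, hgF, hgint⟩ := hsol
  have hφ0K : φ 0 ∈ K := hK.frontier_subset hx
  have hKne : K.Nonempty := ⟨φ 0, hφ0K⟩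
  have hTmem : T ∈ D := hTD ⟨hT, le_rfl⟩
  have hIccD : Icc 0 T ⊆ D := by
    rcases hdom with ⟨T', hT', rfl⟩ | ⟨T', hT', rfl⟩ | rfl
    · exact Icc_subset_Icc_right hTmem.2
    · exact fun t ht => ⟨ht.1, lt_of_le_of_lt ht.2 hTmem.2⟩
    · exact fun t ht => ht.1
  -- integrability of the velocity
  have hgT : IntervalIntegrable g volume 0 T := (hgint T hTmem).1
  have hgIcc : IntegrableOn g (Icc 0 T) volume := by
    rw [← intervalIntegrable_iff_integrableOn_Icc_of_le hT.le]; exact hgT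
  set g' : ℝ → Euc n := (Icc 0 T).indicator g with hg'def
  have hg'int : Integrable g' volume :=
    (integrable_indicator_iff measurableSet_Icc).2 hgIcc
  have hg'ii : ∀ a b : ℝ, IntervalIntegrable g' volume a b := fun a b =>
    hg'int.intervalIntegrable
  -- φ is the primitive of g' on [0, T]
  have hφeq : ∀ t ∈ Icc 0 T, φ t = φ 0 + ∫ s in (0:ℝ)..t, g' s := by
    intro t ht
    have h1 : φ t = φ 0 + ∫ s in (0:ℝ)..t, g s := (hgint t (hIccD ht)).2
    have h2 : ∫ s in (0:ℝ)..t, g' s = ∫ s in (0:ℝ)..t, g s := by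
      have hss : Ioc 0 t ∩ Icc 0 T = Ioc 0 t :=
        inter_eq_left.2 fun u hu => mem_Icc.2 ⟨hu.1.le, hu.2.trans ht.2⟩
      rw [intervalIntegral.integral_of_le ht.1, intervalIntegral.integral_of_le ht.1,
        hg'def, setIntegral_indicator measurableSet_Icc, hss]
    rw [h1, h2]
  have hφdiff : ∀ x ∈ Icc 0 T, ∀ z ∈ Icc 0 T, φ z - φ x = ∫ s in x..z, g' s := by
    intro x hx' z hz'
    rw [hφeq x hx', hφeq z hz',
      show (φ 0 + ∫ s in (0:ℝ)..z, g' s) - (φ 0 + ∫ s in (0:ℝ)..x, g' s)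
        = (∫ s in (0:ℝ)..z, g' s) - ∫ s in (0:ℝ)..x, g' s by abel]
    exact intervalIntegral.integral_interval_sub_left (hg'ii 0 z) (hg'ii 0 x)
  have hφcont : ContinuousOn φ (Icc 0 T) := by
    have hc1 : Continuous fun t => φ 0 + ∫ s in (0:ℝ)..t, g' s :=
      continuous_const.add (intervalIntegral.continuous_primitive hg'ii 0)
    exact hc1.continuousOn.congr hφeq
  -- a bound for the trajectory
  obtain ⟨r, hr⟩ :=
    ((isCompact_Icc.image_of_continuousOn hφcont).isBounded).subset_closedBall (φ 0)
  set R : ℝ := max r 0 with hRdef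
  have hR0 : 0 ≤ R := le_max_right _ _
  have hRb : ∀ t ∈ Icc 0 T, dist (φ t) (φ 0) ≤ R := fun t ht =>
    le_trans (Metric.mem_closedBall.1 (hr (mem_image_of_mem φ ht))) (le_max_left _ _)
  set f : ℝ → ℝ := fun t => Metric.infDist (φ t) K with hfdef
  set h : ℝ → ℝ := fun t => f t ^ 2 with hhdef
  have hfnonneg : ∀ t, 0 ≤ f t := fun t => Metric.infDist_nonneg
  have hfR : ∀ t ∈ Icc 0 T, f t ≤ R := fun t ht =>
    le_trans (Metric.infDist_le_dist_of_mem hφ0K) (hRb t ht)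
  have hf0 : f 0 = 0 := Metric.infDist_zero_of_mem hφ0K
  have hh0 : h 0 = 0 := by simp [hhdef, hf0]
  -- the compact set N and the one-sided Lipschitz constant
  set N : Set (Euc n) := Metric.closedBall (φ 0) (2 * R + 1) with hNdef
  obtain ⟨k, hk, hOSL⟩ := hSA.osLipschitz N
    ⟨φ 0, Metric.mem_closedBall_self (by linarith)⟩ (isCompact_closedBall _ _)
  set c : ℝ := 2 * k with hcdef
  have hc : 0 < c := by positivity
  have hφN : ∀ t ∈ Icc 0 T, φ t ∈ N := fun t ht =>
    Metric.mem_closedBall.2 (le_trans (hRb t ht) (by linarith))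
  -- the dominating density ρ
  set ρ : ℝ → ℝ := fun s => (2 * R) * ‖g' s‖ with hρdef
  have hρnonneg : ∀ s, 0 ≤ ρ s := fun s => by positivity
  have hρint : Integrable ρ volume := hg'int.norm.const_mul _
  have hfLip : ∀ x ∈ Icc 0 T, ∀ z ∈ Icc 0 T, f z - f x ≤ ‖φ z - φ x‖ := by
    intro x hx' z hz'
    have h1 := Metric.infDist_le_infDist_add_dist (x := φ z) (y := φ x) (s := K)
    rw [dist_eq_norm] at h1
    simp only [hfdef]
    linarith
  have key1 : ∀ x ∈ Icc 0 T, ∀ z ∈ Icc 0 T, x ≤ z → h z - h x ≤ ∫ s in x..z, ρ s := by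
    intro x hx' z hz' hxz
    have hInt : (0:ℝ) ≤ ∫ s in x..z, ρ s :=
      intervalIntegral.integral_nonneg hxz fun u _ => hρnonneg u
    rcases le_or_gt (f z) (f x) with hle | hlt
    · have h1 : h z - h x ≤ 0 := by
        have h2 := hfnonneg x; have h3 := hfnonneg z
        simp only [hhdef]; nlinarith
      linarith
    · have h1 : f z - f x ≤ ‖φ z - φ x‖ := hfLip x hx' z hz'
      have h2 : ‖φ z - φ x‖ ≤ ∫ s in x..z, ‖g' s‖ := by
        rw [hφdiff x hx' z hz']
        exact intervalIntegral.norm_integral_le_integral_norm hxz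
      have h3 : f z + f x ≤ 2 * R := by
        have := hfR x hx'; have := hfR z hz'; linarith
      have h4 : ∫ s in x..z, ρ s = (2 * R) * ∫ s in x..z, ‖g' s‖ := by
        simp only [hρdef]; rw [intervalIntegral.integral_const_mul]
      have h5 : h z - h x = (f z - f x) * (f z + f x) := by simp only [hhdef]; ring
      have h6 : (0:ℝ) ≤ ∫ s in x..z, ‖g' s‖ :=
        intervalIntegral.integral_nonneg hxz fun u _ => norm_nonneg _
      rw [h5, h4]
      nlinarith [hfnonneg x, hfnonneg z]
  have hhcont : ContinuousOn h (Icc 0 T) :=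
    ((Metric.continuous_infDist_pt (s := K)).comp_continuousOn hφcont).pow 2
  -- the set of good points
  set Good : Set ℝ :=
    {x | Tendsto (fun z => (z - x)⁻¹ • ∫ u in x..z, g' u) (𝓝[>] x) (𝓝 (g' x))
      ∧ g' x ∈ F (φ x)} with hGooddef
  have hEbad : volume (Ico 0 T \ Good) = 0 := by
    have h1 := aux_ae_tendsto_right_average hg'int
    have h2 : ∀ᵐ x : ℝ, x ∈ Ioo 0 T → g' x ∈ F (φ x) := by
      have hsub : volume.restrict (Ioo 0 T) ≤ volume.restrict D :=
        Measure.restrict_mono (fun u hu => hTD ⟨hu.1, hu.2.le⟩) le_rfl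
      have h3 : ∀ᵐ t ∂volume.restrict (Ioo 0 T), g t ∈ F (φ t) := ae_mono hsub hgF
      have h4 := (ae_restrict_iff' measurableSet_Ioo).1 h3
      filter_upwards [h4] with u hu hu'
      have hmem : u ∈ Icc 0 T := mem_Icc.2 ⟨hu'.1.le, hu'.2.le⟩
      rw [hg'def, indicator_of_mem hmem]
      exact hu hu'
    have hA : volume {x : ℝ | ¬ Tendsto (fun z => (z - x)⁻¹ • ∫ u in x..z, g' u)
        (𝓝[>] x) (𝓝 (g' x))} = 0 := by
      rw [← ae_iff] at *; exact h1
    have hB : volume {x : ℝ | ¬ (x ∈ Ioo 0 T → g' x ∈ F (φ x))} = 0 := by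
      rw [← ae_iff] at *; exact h2
    have hsub2 : Ico 0 T \ Good ⊆ {x : ℝ | ¬ Tendsto (fun z => (z - x)⁻¹ • ∫ u in x..z, g' u)
        (𝓝[>] x) (𝓝 (g' x))} ∪ ({x : ℝ | ¬ (x ∈ Ioo 0 T → g' x ∈ F (φ x))} ∪ {(0:ℝ)}) := by
      rintro x ⟨hx1, hx2⟩
      rw [hGooddef, mem_setOf_eq, not_and_or] at hx2
      rcases hx2 with hx2 | hx2
      · exact Or.inl hx2
      · rcases eq_or_lt_of_le hx1.1 with h0 | h0
        · exact Or.inr (Or.inr (by simp [← h0]))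
        · exact Or.inr (Or.inl (fun hcon => hx2 (hcon ⟨h0, hx1.2⟩)))
    exact measure_mono_null hsub2
      (measure_union_null hA (measure_union_null hB (measure_singleton 0)))
  -- the main ε-estimate
  have main : ∀ ε > (0:ℝ), ∀ t ∈ Icc 0 T, h t ≤ ε * Real.exp (3 * c * t) + ε := by
    intro ε hε
    obtain ⟨δ, hδpos, hδ⟩ := exists_pos_setLIntegral_lt_of_measure_lt
      (μ := volume) (f := fun s => ENNReal.ofReal (ρ s)) hρint.lintegral_lt_top.ne
      (ε := ENNReal.ofReal ε) (ENNReal.ofReal_pos.2 hε).ne'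
    obtain ⟨U, hEU, hUopen, hUvol⟩ := Set.exists_isOpen_lt_of_lt (Ico 0 T \ Good) δ
      (by rw [hEbad]; exact hδpos)
    have hUlint : ∫⁻ s in U, ENNReal.ofReal (ρ s) < ENNReal.ofReal ε := hδ U hUvol
    set P : ℝ → ℝ := fun t => ∫ s in (0:ℝ)..t, U.indicator ρ s with hPdef
    have hUρint : Integrable (U.indicator ρ) volume := hρint.indicator hUopen.measurableSet
    have hPcont : Continuous P :=
      intervalIntegral.continuous_primitive (fun a b => hUρint.intervalIntegrable) 0
    have hPdiffeq : ∀ x z : ℝ, P z - P x = ∫ s in x..z, U.indicator ρ s := fun x z =>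
      intervalIntegral.integral_interval_sub_left hUρint.intervalIntegrable
        hUρint.intervalIntegrable
    have hPmono : ∀ x z : ℝ, x ≤ z → P x ≤ P z := by
      intro x z hxz
      have h1 : 0 ≤ ∫ s in x..z, U.indicator ρ s :=
        intervalIntegral.integral_nonneg hxz fun u _ =>
          indicator_nonneg (fun s _ => hρnonneg s) u
      linarith [hPdiffeq x z]
    have hP0 : P 0 = 0 := intervalIntegral.integral_same
    have hPbound : ∀ t : ℝ, 0 ≤ t → P t ≤ ε := by
      intro t ht
      have h1 : P t = ∫ s in Ioc 0 t ∩ U, ρ s := by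
        simp only [hPdef]
        rw [intervalIntegral.integral_of_le ht, setIntegral_indicator hUopen.measurableSet]
      have h2 : ∫ s in Ioc 0 t ∩ U, ρ s ≤ ∫ s in U, ρ s :=
        setIntegral_mono_set hρint.integrableOn
          (by filter_upwards with u using hρnonneg u)
          (HasSubset.Subset.eventuallyLE inter_subset_right)
      have h3 : ∫ s in U, ρ s = (∫⁻ s in U, ENNReal.ofReal (ρ s)).toReal := by
        rw [integral_eq_lintegral_of_nonneg_ae (by filter_upwards with s using hρnonneg s)
          hρint.aestronglyMeasurable.restrict]
      have h4 : (∫⁻ s in U, ENNReal.ofReal (ρ s)).toReal ≤ ε :=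
        ENNReal.toReal_le_of_le_ofReal hε.le hUlint.le
      rw [h1]; rw [h3] at h2; linarith
    -- fencing argument
    set F1 : ℝ → ℝ := fun t => h t - P t with hF1def
    set F1' : ℝ → ℝ := fun t => if t ∈ U then 0 else c * h t with hF1'def
    set B : ℝ → ℝ := fun t => ε * Real.exp (3 * c * t) with hBdef
    set B' : ℝ → ℝ := fun t => ε * (Real.exp (3 * c * t) * (3 * c)) with hB'def
    have hBpos : ∀ t, 0 < B t := fun t => by
      simp only [hBdef]; positivity
    have hBderiv : ∀ t : ℝ, HasDerivAt B (B' t) t := by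
      intro t
      have h1 : HasDerivAt (fun t : ℝ => 3 * c * t) (3 * c) t := by
        simpa using (hasDerivAt_id t).const_mul (3 * c)
      simpa [hBdef, hB'def] using (h1.exp.const_mul ε)
    have hF1cont : ContinuousOn F1 (Icc 0 T) := hhcont.sub hPcont.continuousOn
    have hF1a : F1 0 ≤ B 0 := by
      simp only [hF1def, hBdef, hh0, hP0]
      simp [hε.le]
    have hbound : ∀ x ∈ Ico 0 T, F1 x = B x → F1' x < B' x := by
      intro x hx' hFB
      by_cases hxU : x ∈ U
      · simp only [hF1'def, if_pos hxU, hB'def]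
        positivity
      · simp only [hF1'def, if_neg hxU, hB'def]
        have hPx : P x ≤ ε := hPbound x hx'.1
        have hPx0 : 0 ≤ P x := by rw [← hP0]; exact hPmono 0 x hx'.1
        have hhx : h x = B x + P x := by
          have : h x - P x = B x := hFB
          linarith
        have hexp1 : 1 ≤ Real.exp (3 * c * x) :=
          Real.one_le_exp (by nlinarith [hx'.1])
        have hexppos := Real.exp_pos (3 * c * x)
        simp only [hBdef] at hhx
        have hb1 : c * P x ≤ c * ε := mul_le_mul_of_nonneg_left hPx hc.le
        have hb2 : c * ε * 1 ≤ c * ε * Real.exp (3 * c * x) :=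
          mul_le_mul_of_nonneg_left hexp1 (mul_pos hc hε).le
        nlinarith [mul_pos hc (mul_pos hε hexppos)]
    have hslope : ∀ x ∈ Ico 0 T, ∀ r, F1' x < r → ∃ᶠ z in 𝓝[>] x, slope F1 x z < r := by
      intro x hx' r hr
      have hx0 : (0:ℝ) ≤ x := hx'.1
      have hxT : x < T := hx'.2
      have hxIcc : x ∈ Icc 0 T := ⟨hx0, hxT.le⟩
      by_cases hxU : x ∈ U
      · -- inside U the slope of F1 is nonpositive
        simp only [hF1'def, if_pos hxU] at hr
        obtain ⟨δ', hδ'pos, hball⟩ := Metric.isOpen_iff.1 hUopen x hxU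
        have hev : ∀ᶠ z in 𝓝[>] x, z ∈ Ioo x (min (x + δ') T) :=
          Ioo_mem_nhdsGT_of_mem ⟨le_rfl, lt_min (by linarith) hxT⟩
        refine (hev.mono ?_).frequently
        intro z hz
        have hxz : x < z := hz.1
        have hzT : z ≤ T := le_of_lt (lt_of_lt_of_le hz.2 (min_le_right _ _))
        have hzIcc : z ∈ Icc 0 T := ⟨by linarith, hzT⟩
        have hzδ : z < x + δ' := lt_of_lt_of_le hz.2 (min_le_left _ _)
        have hIocU : Ioc x z ⊆ U := by
          intro u hu
          apply hball
          rw [Metric.mem_ball, Real.dist_eq, abs_of_pos (sub_pos.2 hu.1)]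
          linarith [hu.2]
        have hPeq : P z - P x = ∫ s in x..z, ρ s := by
          rw [hPdiffeq x z, intervalIntegral.integral_of_le hxz.le,
            intervalIntegral.integral_of_le hxz.le]
          exact setIntegral_congr_fun measurableSet_Ioc
            (fun u hu => indicator_of_mem (hIocU hu) ρ)
        have hhz := key1 x hxIcc z hzIcc hxz.le
        have hsl : slope F1 x z ≤ 0 := by
          rw [slope_def_field]
          apply div_nonpos_of_nonpos_of_nonneg
          · simp only [hF1def]; linarith
          · linarith [hxz]
        exact lt_of_le_of_lt hsl hr
      · -- good point: use the projection and tangency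
        have hxGood : x ∈ Good := by
          by_contra hbad
          exact hxU (hEU ⟨⟨hx0, hxT⟩, hbad⟩)
        obtain ⟨hx1, hx2⟩ := hxGood
        simp only [hF1'def, if_neg hxU] at hr
        obtain ⟨zs, hzsK, hzsd, hL⟩ :
            ∃ zs, zs ∈ K ∧ ‖φ x - zs‖ ^ 2 = h x ∧ 2 * ⟪φ x - zs, g' x⟫ ≤ c * h x := by
          by_cases hφxK : φ x ∈ K
          · refine ⟨φ x, hφxK, ?_, ?_⟩
            · simp [hhdef, hfdef, Metric.infDist_zero_of_mem hφxK]
            · have h1 : φ x - φ x = 0 := sub_self _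
              rw [h1, inner_zero_left]
              have := hfnonneg x
              simp only [hhdef]
              nlinarith
          · have hx0' : 0 < x := by
              rcases eq_or_lt_of_le hx0 with h0 | h0
              · exact absurd (show φ x ∈ K by rw [← h0]; exact hφ0K) hφxK
              · exact h0
            obtain ⟨zs, ⟨hzsf, hzsdist⟩, hzsint⟩ := hstar x ⟨hx0', hxT.le⟩
            have hfr : Metric.infDist (φ x) (frontier K) = Metric.infDist (φ x) K :=
              aux_infDist_frontier_eq hK hKne hφxK
            have hzsK : zs ∈ K := hK.frontier_subset hzsf
            have hdx : dist (φ x) zs = f x := by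
              rw [hzsdist, hfr]
            have hmin : ∀ p ∈ K, ‖φ x - zs‖ ≤ ‖φ x - p‖ := by
              intro p hp
              rw [← dist_eq_norm, ← dist_eq_norm, hdx]
              exact Metric.infDist_le_dist_of_mem hp
            have hzsN : zs ∈ N := by
              rw [hNdef, Metric.mem_closedBall]
              have h1 : dist zs (φ 0) ≤ dist zs (φ x) + dist (φ x) (φ 0) := dist_triangle _ _ _
              have h2 : dist zs (φ x) = f x := by rw [dist_comm]; exact hdx
              have h3 := hfR x hxIcc; have h4 := hRb x hxIcc
              linarith
            obtain ⟨w₂, hw₂F, hw₂ineq⟩ := hOSL (φ x) (hφN x hxIcc) zs hzsN (g' x) hx2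
            have hw₂tan : w₂ ∈ contingentCone K zs := hTang zs ⟨hzsf, hzsint⟩ hw₂F
            have hinner : ⟪φ x - zs, w₂⟫ ≤ 0 :=
              aux_inner_nonpos_of_mem_contingentCone hmin hw₂tan
            have hsq : ‖φ x - zs‖ ^ 2 = h x := by
              rw [← dist_eq_norm, hdx]
            refine ⟨zs, hzsK, hsq, ?_⟩
            simp only [hcdef]
            nlinarith [hw₂ineq, hinner, hsq]
        have hev1 : ∀ᶠ z in 𝓝[>] x, z ∈ Ioc x T := Ioc_mem_nhdsGT_of_mem ⟨le_rfl, hxT⟩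
        have hφtends : Tendsto φ (𝓝[>] x) (𝓝 (φ x)) := by
          have h1 : Tendsto φ (𝓝[Icc 0 T] x) (𝓝 (φ x)) := hφcont x hxIcc
          apply h1.mono_left
          rw [nhdsWithin_le_iff]
          exact mem_of_superset hev1 fun z hz => ⟨le_trans hx0 hz.1.le, hz.2⟩
        have hS : Tendsto (fun z => ⟪(z - x)⁻¹ • (φ z - φ x), (φ z - zs) + (φ x - zs)⟫)
            (𝓝[>] x) (𝓝 ⟪g' x, (φ x - zs) + (φ x - zs)⟫) := by
          apply Tendsto.inner
          · apply Tendsto.congr' _ hx1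
            filter_upwards [hev1] with z hz
            rw [hφdiff x hxIcc z ⟨le_trans hx0 hz.1.le, hz.2⟩]
          · have h1 : Tendsto (fun z => (φ z - zs) + (φ x - zs)) (𝓝[>] x)
                (𝓝 ((φ x - zs) + (φ x - zs))) :=
              (hφtends.sub tendsto_const_nhds).add tendsto_const_nhds
            exact h1
        have hlim_lt : ⟪g' x, (φ x - zs) + (φ x - zs)⟫ < r := by
          have heq : ⟪g' x, (φ x - zs) + (φ x - zs)⟫ = 2 * ⟪φ x - zs, g' x⟫ := by
            rw [inner_add_right, real_inner_comm]; ring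
          rw [heq]; linarith
        have hev2 := hS.eventually_lt_const hlim_lt
        refine ((hev1.and hev2).mono ?_).frequently
        rintro z ⟨hz, hSz⟩
        have hxz : x < z := hz.1
        have hzx : (0:ℝ) < z - x := sub_pos.2 hxz
        have hzIcc : z ∈ Icc 0 T := ⟨le_trans hx0 hxz.le, hz.2⟩
        have hnum : h z - h x ≤ ⟪φ z - φ x, (φ z - zs) + (φ x - zs)⟫ := by
          have h1 : h z ≤ ‖φ z - zs‖ ^ 2 := by
            have h2 := Metric.infDist_le_dist_of_mem (x := φ z) hzsK
            rw [dist_eq_norm] at h2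
            simp only [hhdef, hfdef]
            nlinarith [Metric.infDist_nonneg (x := φ z) (s := K)]
          have h2 : ‖φ z - zs‖ ^ 2 - ‖φ x - zs‖ ^ 2
              = ⟪(φ z - zs) - (φ x - zs), (φ z - zs) + (φ x - zs)⟫ :=
            (aux_inner_sub_add_self _ _).symm
          rw [show (φ z - zs) - (φ x - zs) = φ z - φ x by abel] at h2
          linarith [hzsd]
        rw [slope_def_field]
        have hq : (F1 z - F1 x) / (z - x) ≤ (h z - h x) / (z - x) := by
          apply (div_le_div_iff_of_pos_right hzx).2
          simp only [hF1def]
          linarith [hPmono x z hxz.le]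
        have hq2 : (h z - h x) / (z - x)
            ≤ ⟪(z - x)⁻¹ • (φ z - φ x), (φ z - zs) + (φ x - zs)⟫ := by
          rw [real_inner_smul_left, div_eq_inv_mul]
          exact mul_le_mul_of_nonneg_left hnum (inv_nonneg.2 hzx.le)
        exact lt_of_le_of_lt (hq.trans hq2) hSz
    have hfence := image_le_of_liminf_slope_right_lt_deriv_boundary
      hF1cont hslope hF1a hBderiv hbound
    intro t ht
    have h1 := hfence ht
    have h2 : P t ≤ ε := hPbound t ht.1
    simp only [hF1def, hBdef] at h1
    linarith
  -- conclusion
  intro t ht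
  have hht : h t ≤ 0 := by
    by_contra hpos
    push_neg at hpos
    set Cst : ℝ := Real.exp (3 * c * T) + 1 with hCdef
    have hCpos : 0 < Cst := by positivity
    have h1 := main (h t / (2 * Cst)) (by positivity) t ht
    have hexp : Real.exp (3 * c * t) ≤ Real.exp (3 * c * T) :=
      Real.exp_le_exp.2 (by nlinarith [ht.2])
    have h2 : h t / (2 * Cst) * Real.exp (3 * c * t) + h t / (2 * Cst)
        ≤ h t / (2 * Cst) * Cst := by
      rw [hCdef]
      have h3 : 0 < h t / (2 * Cst) := by positivity
      nlinarith
    have h4 : h t / (2 * Cst) * Cst = h t / 2 := by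
      field_simp
    nlinarith
  have hft : f t = 0 := by
    have h1 := hfnonneg t
    have h2 : f t ^ 2 ≤ 0 := hht
    nlinarith
  exact (hK.mem_iff_infDist_zero hKne).2 hft
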